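/- arXiv:0909.4354 — 2 statements merged into one kernel-verified Lean document; each statement's English description precedes it below -/
import Mathlib

section
/- For any θ ∈ ℝ, ∫₀^{π/2 - θ} sin(τ+θ) sin τ dτ + ∫_{π/2-θ}^{π} sin(τ+θ+π) sin τ dτ = -θ cos θ. -/
open Real

theorem stmt_8 (θ : ℝ) :
    (∫ τ in (0:ℝ)..(π / 2 - θ), Real.sin (τ + θ) * Real.sin τ) +
        (∫ τ in (π / 2 - θ)..π, Real.sin (τ + θ + π) * Real.sin τ) =
      -θ * Real.cos θ := by
  have key : ∀ τ : ℝ, HasDerivAt (fun t => Real.cos θ * t / 2 - Real.sin (2*t+θ) / 4)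
      (Real.sin (τ + θ) * Real.sin τ) τ := by
    intro τ
    have h1 : HasDerivAt (fun t : ℝ => Real.cos θ * t / 2) (Real.cos θ / 2) τ := by
      simpa using ((hasDerivAt_id τ).const_mul (Real.cos θ)).div_const 2
    have h2 : HasDerivAt (fun t : ℝ => Real.sin (2*t+θ) / 4) (Real.cos (2*τ+θ) / 2) τ := by
      have : HasDerivAt (fun t : ℝ => 2*t+θ) 2 τ := by
        simpa using ((hasDerivAt_id τ).const_mul (2:ℝ)).add_const θ
      have := (Real.hasDerivAt_sin (2*τ+θ)).comp τ this
      refine (this.div_const 4).congr_deriv (Eq.symm ?_); ring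
    have := h1.sub h2
    refine this.congr_deriv (Eq.symm ?_)
    rw [show (2*τ+θ) = τ+(τ+θ) by ring, Real.cos_add, Real.sin_add, Real.cos_add]
    have hp := Real.sin_sq_add_cos_sq τ
    linear_combination (Real.cos θ / 2) * hp
  have i1 : (∫ τ in (0:ℝ)..(π / 2 - θ), Real.sin (τ + θ) * Real.sin τ) =
      (Real.cos θ * (π/2 - θ) / 2 - Real.sin (2*(π/2-θ)+θ) / 4) -
      (Real.cos θ * 0 / 2 - Real.sin (2*0+θ) / 4) := by
    apply intervalIntegral.integral_eq_sub_of_hasDerivAt (fun τ _ => key τ)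
    apply Continuous.intervalIntegrable; continuity
  have i2 : (∫ τ in (π / 2 - θ)..π, Real.sin (τ + θ + π) * Real.sin τ) =
      (-(Real.cos θ * π / 2 - Real.sin (2*π+θ) / 4)) -
      (-(Real.cos θ * (π/2-θ) / 2 - Real.sin (2*(π/2-θ)+θ) / 4)) := by
    have key2 : ∀ τ : ℝ, HasDerivAt (fun t => -(Real.cos θ * t / 2 - Real.sin (2*t+θ) / 4))
        (Real.sin (τ + θ + π) * Real.sin τ) τ := by
      intro τ
      have := (key τ).neg
      refine this.congr_deriv (Eq.symm ?_)
      rw [Real.sin_add_pi]; ring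
    apply intervalIntegral.integral_eq_sub_of_hasDerivAt (fun τ _ => key2 τ)
    apply Continuous.intervalIntegrable; continuity
  rw [i1, i2]
  have e3 : (2*(π/2-θ)+θ) = π - θ := by ring
  have e4 : Real.sin (2*π+θ) = Real.sin θ := by
    rw [add_comm, Real.sin_add_two_pi]
  rw [e3, e4, Real.sin_pi_sub]
  ring
end

section
/- Suppose P_ε : ℝ² → ℝ² for ε ∈ [0,1] has the form P_ε(x) = x + ε(P̄(x) + R_ε(x)), where P̄ is C¹ with P̄(x₀) = 0, the eigenvalues of the Jacobian DP̄(x₀) have negative real parts, and R_ε together with DR_ε converge to 0 uniformly on a ball around x₀ as ε → 0, with each R_ε of class C¹. Then for all sufficiently small ε > 0, P_ε has a fixed point x_ε in that ball, and x_ε → x₀ as ε → 0. -/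
open Matrix

theorem stmt_18 (x₀ : Fin 2 → ℝ) (δ : ℝ) (hδ : 0 < δ)
    (Pbar : (Fin 2 → ℝ) → (Fin 2 → ℝ))
    (R : ℝ → (Fin 2 → ℝ) → (Fin 2 → ℝ))
    (P : ℝ → (Fin 2 → ℝ) → (Fin 2 → ℝ))
    (J : Matrix (Fin 2) (Fin 2) ℝ)
    (hPbar : ContDiffOn ℝ 1 Pbar (Metric.ball x₀ δ))
    (hzero : Pbar x₀ = 0)
    (hJ : HasFDerivAt Pbar (J.mulVecLin.toContinuousLinearMap) x₀)
    (heig : ∀ z : ℂ, ((J.map Complex.ofReal).charpoly).IsRoot z → z.re < 0)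
    (hR : ∀ ε ∈ Set.Ioc (0:ℝ) 1, ContDiffOn ℝ 1 (R ε) (Metric.ball x₀ δ))
    (hRconv : TendstoUniformlyOn R 0 (nhdsWithin 0 (Set.Ioi 0)) (Metric.ball x₀ δ))
    (hDRconv :
      TendstoUniformlyOn (fun ε x => fderiv ℝ (R ε) x) 0 (nhdsWithin 0 (Set.Ioi 0))
        (Metric.ball x₀ δ))
    (hP : ∀ ε x, P ε x = x + ε • (Pbar x + R ε x)) :
    ∃ xfix : ℝ → (Fin 2 → ℝ),
      (∀ᶠ ε in nhdsWithin 0 (Set.Ioi 0),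
        P ε (xfix ε) = xfix ε ∧ xfix ε ∈ Metric.ball x₀ δ) ∧
        Filter.Tendsto xfix (nhdsWithin 0 (Set.Ioi 0)) (nhds x₀) := by
  classical
  -- J has nonzero determinant
  have hdet : IsUnit J.det := by
    rw [isUnit_iff_ne_zero]
    intro h0
    have hroot : ((J.map Complex.ofReal).charpoly).IsRoot 0 := by
      have hdc : (J.map Complex.ofReal).det = 0 := by
        have h := (RingHom.map_det Complex.ofRealHom J).symm
        rw [show J.map Complex.ofReal = Complex.ofRealHom.mapMatrix J from rfl, h, h0]
        simp
      have := Matrix.det_eq_sign_charpoly_coeff (J.map Complex.ofReal)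
      rw [hdc] at this
      have hc0 : ((J.map Complex.ofReal).charpoly).coeff 0 = 0 := by
        have : ((-1 : ℂ) ^ Fintype.card (Fin 2)) * ((J.map Complex.ofReal).charpoly).coeff 0 = 0 :=
          this.symm
        simpa using this
      simpa [Polynomial.IsRoot, ← Polynomial.coeff_zero_eq_eval_zero] using hc0
    have := heig 0 hroot
    simp at this
  haveI hinv : Invertible J := J.invertibleOfIsUnitDet hdet
  -- the derivative as a continuous linear equivalence
  let A : (Fin 2 → ℝ) ≃L[ℝ] (Fin 2 → ℝ) :=
    (Matrix.toLinearEquiv' J hinv).toContinuousLinearEquiv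
  have hcoe : (A : (Fin 2 → ℝ) →L[ℝ] (Fin 2 → ℝ)) = J.mulVecLin.toContinuousLinearMap := by
    ext x
    rfl
  -- strict differentiability at x₀
  have hstrict : HasStrictFDerivAt Pbar (A : (Fin 2 → ℝ) →L[ℝ] (Fin 2 → ℝ)) x₀ := by
    have hmem : Metric.ball x₀ δ ∈ nhds x₀ :=
      Metric.isOpen_ball.mem_nhds (Metric.mem_ball_self hδ)
    have h1 : ContDiffAt ℝ 1 Pbar x₀ := hPbar.contDiffAt hmem
    have h2 := h1.hasStrictFDerivAt one_ne_zero
    rwa [hJ.fderiv, ← hcoe] at h2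
  set N : NNReal := ‖(A.symm : (Fin 2 → ℝ) →L[ℝ] (Fin 2 → ℝ))‖₊ with hNdef
  have hN : 0 < N := by
    rcases eq_or_lt_of_le (zero_le : (0:NNReal) ≤ N) with h | h
    · exfalso
      have hz : (A.symm : (Fin 2 → ℝ) →L[ℝ] (Fin 2 → ℝ)) = 0 := by
        have : ‖(A.symm : (Fin 2 → ℝ) →L[ℝ] (Fin 2 → ℝ))‖ = 0 := by
          simpa [hNdef] using congrArg (fun x : NNReal => (x : ℝ)) h.symm
        exact norm_eq_zero.mp this
      have h1 : A.symm (fun _ => (1:ℝ)) = A.symm 0 := by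
        rw [map_zero]
        rw [show A.symm (fun _ => (1:ℝ)) = (A.symm : (Fin 2 → ℝ) →L[ℝ] (Fin 2 → ℝ)) (fun _ => (1:ℝ)) from rfl, hz]
        rfl
      have := A.symm.injective h1
      have := congrFun this 0
      norm_num at this
    · exact h
  have hNinv : (0:NNReal) < N⁻¹ := by positivity
  set c₁ : NNReal := N⁻¹ / 4 with hc₁def
  have hc₁ : (0:NNReal) < c₁ := by positivity
  have hNR : (0:ℝ) < ((N:ℝ))⁻¹ := by
    have : (0:ℝ) < (N:ℝ) := by exact_mod_cast hN
    positivity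
  have hcc : c₁ + c₁ < N⁻¹ := by
    rw [hc₁def, ← NNReal.coe_lt_coe]
    push_cast
    linarith
  -- approximation of Pbar near x₀
  obtain ⟨s, hs_nhds, hs⟩ := hstrict.approximates_deriv_on_nhds (Or.inr hc₁)
  obtain ⟨r₁, hr₁, hball⟩ := Metric.mem_nhds_iff.mp hs_nhds
  set r : ℝ := min r₁ δ / 2 with hrdef
  have hr : 0 < r := by positivity
  have hrδ : r < δ := by
    calc r ≤ δ / 2 := by
          rw [hrdef]; gcongr; exact min_le_right _ _
      _ < δ := by linarith
  have hcb_ball : Metric.closedBall x₀ r ⊆ Metric.ball x₀ δ := by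
    intro x hx
    have := Metric.mem_closedBall.mp hx
    exact Metric.mem_ball.mpr (lt_of_le_of_lt this hrδ)
  have hcb_s : Metric.closedBall x₀ r ⊆ s := by
    intro x hx
    apply hball
    have := Metric.mem_closedBall.mp hx
    have hrr : r < r₁ := by
      calc r ≤ r₁ / 2 := by rw [hrdef]; gcongr; exact min_le_left _ _
        _ < r₁ := by linarith
    exact Metric.mem_ball.mpr (lt_of_le_of_lt this hrr)
  -- quantities
  set K : NNReal := (N⁻¹ - (c₁ + c₁))⁻¹ with hKdef
  set ρ : ℝ := ((N:ℝ)⁻¹ - ((c₁ + c₁ : NNReal) : ℝ)) * r with hρdef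
  have hρpos : 0 < ρ := by
    apply mul_pos _ hr
    have : ((c₁ + c₁ : NNReal) : ℝ) < ((N⁻¹ : NNReal) : ℝ) := by exact_mod_cast hcc
    have h2 : ((N⁻¹ : NNReal) : ℝ) = (N:ℝ)⁻¹ := by simp
    linarith [h2 ▸ this]
  -- the key existence claim for good ε
  have key : ∀ ε : ℝ, ε ∈ Set.Ioc (0:ℝ) 1 →
      (∀ x ∈ Metric.ball x₀ δ, dist ((0 : (Fin 2 → ℝ) → ((Fin 2 → ℝ) →L[ℝ] (Fin 2 → ℝ))) x) (fderiv ℝ (R ε) x) < c₁) →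
      dist ((0 : (Fin 2 → ℝ) → (Fin 2 → ℝ)) x₀) (R ε x₀) < ρ →
      ∃ x, x ∈ Metric.closedBall x₀ r ∧ P ε x = x ∧ dist x x₀ ≤ (K : ℝ) * ‖R ε x₀‖ := by
    intro ε hε hDsmall hRsmall
    set g : (Fin 2 → ℝ) → (Fin 2 → ℝ) := fun x => Pbar x + R ε x with hgdef
    -- R ε is Lipschitz with constant c₁ on the ball
    have hlip : LipschitzOnWith c₁ (R ε) (Metric.ball x₀ δ) := by
      apply Convex.lipschitzOnWith_of_nnnorm_fderiv_le (C := c₁)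
        (fun x hx => ((hR ε hε).differentiableOn one_ne_zero).differentiableAt
          (Metric.isOpen_ball.mem_nhds hx))
        (fun x hx => ?_) (convex_ball _ _)
      have := hDsmall x hx
      simp only [Pi.zero_apply] at this
      rw [dist_comm, dist_zero_right] at this
      exact le_of_lt (by exact_mod_cast this)
    -- g approximates A on the closed ball with constant c₁ + c₁
    have hg : ApproximatesLinearOn g (A : (Fin 2 → ℝ) →L[ℝ] (Fin 2 → ℝ))
        (Metric.closedBall x₀ r) (c₁ + c₁) := by
      intro x hx y hy
      have h1 : ‖Pbar x - Pbar y - (A : (Fin 2 → ℝ) →L[ℝ] (Fin 2 → ℝ)) (x - y)‖ ≤ c₁ * ‖x - y‖ :=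
        hs x (hcb_s hx) y (hcb_s hy)
      have h2 : ‖R ε x - R ε y‖ ≤ c₁ * ‖x - y‖ := by
        have := hlip.dist_le_mul x (hcb_ball hx) y (hcb_ball hy)
        simpa [dist_eq_norm] using this
      have heq : g x - g y - (A : (Fin 2 → ℝ) →L[ℝ] (Fin 2 → ℝ)) (x - y)
          = (Pbar x - Pbar y - (A : (Fin 2 → ℝ) →L[ℝ] (Fin 2 → ℝ)) (x - y)) + (R ε x - R ε y) := by
        simp only [hgdef]; abel
      calc ‖g x - g y - (A : (Fin 2 → ℝ) →L[ℝ] (Fin 2 → ℝ)) (x - y)‖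
          ≤ ‖Pbar x - Pbar y - (A : (Fin 2 → ℝ) →L[ℝ] (Fin 2 → ℝ)) (x - y)‖ + ‖R ε x - R ε y‖ := by
            rw [heq]; exact norm_add_le _ _
        _ ≤ c₁ * ‖x - y‖ + c₁ * ‖x - y‖ := add_le_add h1 h2
        _ = ((c₁ + c₁ : NNReal) : ℝ) * ‖x - y‖ := by push_cast; ring
    -- surjectivity: find x with g x = 0
    have hsurj := hg.surjOn_closedBall_of_nonlinearRightInverse A.toNonlinearRightInverse
      (le_of_lt hr) (subset_refl _)
    have hgx₀ : g x₀ = R ε x₀ := by rw [hgdef]; simp [hzero]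
    have h0mem : (0 : Fin 2 → ℝ) ∈ Metric.closedBall (g x₀)
        (((A.toNonlinearRightInverse.nnnorm : ℝ)⁻¹ - (c₁ + c₁ : NNReal)) * r) := by
      rw [Metric.mem_closedBall, hgx₀]
      have hnn : (A.toNonlinearRightInverse.nnnorm : ℝ) = (N : ℝ) := rfl
      rw [hnn]
      have h5 : dist (0 : Fin 2 → ℝ) (R ε x₀) < ρ := hRsmall
      exact le_of_lt h5
    obtain ⟨x, hxmem, hgx⟩ := hsurj h0mem
    refine ⟨x, hxmem, ?_, ?_⟩
    · rw [hP]
      rw [show Pbar x + R ε x = g x from rfl, hgx]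
      simp
    · -- antilipschitz bound
      have hanti := hg.antilipschitz (Or.inr hcc)
      have hx₀mem : x₀ ∈ Metric.closedBall x₀ r := Metric.mem_closedBall_self (le_of_lt hr)
      have h5 : dist x x₀ ≤ (K : ℝ) * dist (g x) (g x₀) :=
        hanti.le_mul_dist ⟨x, hxmem⟩ ⟨x₀, hx₀mem⟩
      rw [hgx, hgx₀] at h5
      calc dist x x₀ ≤ (K : ℝ) * dist (0 : Fin 2 → ℝ) (R ε x₀) := h5
        _ = (K : ℝ) * ‖R ε x₀‖ := by rw [dist_comm, dist_zero_right]
  -- definition of xfix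
  set Q : ℝ → Prop := fun ε =>
    ∃ x, x ∈ Metric.closedBall x₀ r ∧ P ε x = x ∧ dist x x₀ ≤ (K : ℝ) * ‖R ε x₀‖ with hQdef
  set xfix : ℝ → (Fin 2 → ℝ) := fun ε => if h : Q ε then h.choose else x₀ with hxfixdef
  have hbound : ∀ ε, dist (xfix ε) x₀ ≤ (K : ℝ) * ‖R ε x₀‖ := by
    intro ε
    simp only [hxfixdef]
    by_cases h : Q ε
    · rw [dif_pos h]
      exact h.choose_spec.2.2
    · rw [dif_neg h]
      simp only [dist_self]
      positivity
  -- the eventual properties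
  have hevQ : ∀ᶠ ε in nhdsWithin 0 (Set.Ioi 0), Q ε := by
    have h1 : ∀ᶠ ε in nhdsWithin (0:ℝ) (Set.Ioi 0), ε ∈ Set.Ioc (0:ℝ) 1 := by
      have ha : ∀ᶠ ε in nhdsWithin (0:ℝ) (Set.Ioi 0), ε ∈ Set.Ioi (0:ℝ) :=
        self_mem_nhdsWithin
      have hb : ∀ᶠ ε in nhdsWithin (0:ℝ) (Set.Ioi 0), ε < 1 :=
        nhdsWithin_le_nhds (Filter.Tendsto.eventually_lt_const one_pos Filter.tendsto_id)
      filter_upwards [ha, hb] with ε h1 h2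
      exact ⟨h1, le_of_lt h2⟩
    have h2 := (Metric.tendstoUniformlyOn_iff.mp hDRconv) c₁ (by exact_mod_cast hc₁)
    have h3 := (Metric.tendstoUniformlyOn_iff.mp hRconv) ρ hρpos
    filter_upwards [h1, h2, h3] with ε hε hD hRs
    exact key ε hε (fun x hx => hD x hx) (hRs x₀ (Metric.mem_ball_self hδ))
  refine ⟨xfix, ?_, ?_⟩
  · filter_upwards [hevQ] with ε hQε
    have hspec := hQε.choose_spec
    simp only [hxfixdef, dif_pos hQε]
    exact ⟨hspec.2.1, hcb_ball hspec.1⟩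
  · rw [tendsto_iff_dist_tendsto_zero]
    apply squeeze_zero (fun ε => dist_nonneg) hbound
    have hRx₀ : Filter.Tendsto (fun ε => R ε x₀) (nhdsWithin 0 (Set.Ioi 0)) (nhds 0) := by
      have := hRconv.tendsto_at (Metric.mem_ball_self hδ)
      simpa using this
    have : Filter.Tendsto (fun ε => (K : ℝ) * ‖R ε x₀‖) (nhdsWithin 0 (Set.Ioi 0)) (nhds ((K:ℝ) * ‖(0 : Fin 2 → ℝ)‖)) :=
      (hRx₀.norm).const_mul _
    simpa using this
end
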